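/- Let α, β > −1 and let w_{α,β}(t) = (1−t)^α (1+t)^β for t ∈ [−1, 1] and w_{α,β}(t) = 0 otherwise. Then: (a) ν_2(w_{α,β}; t) = 0 whenever |t| > 2; (b) ν_2(w_{α,β}; −t) = ν_2(w_{β,α}; t) for all t; and (c) for 0 < t ≤ 2, ν_2(w_{α,β}; t) = 2^{−(2α+1)} (2−t)^{2α+3} ∫_{−1}^{1} (2t + ((2−t)²/4)(1−u²))^β · u² (1−u²)^α du. -/

import Mathlib

open MeasureTheory

/-- The second correlation function ν₂(f; t) = ∫_ℝ (t − 2s)² f(s) f(t−s) ds. -/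
noncomputable def corr2 (f : ℝ → ℝ) (t : ℝ) : ℝ :=
  ∫ s : ℝ, (t - 2 * s) ^ 2 * f s * f (t - s)
/-- The Jacobi weight w_{α,β}(t) = (1−t)^α (1+t)^β on [−1,1], zero elsewhere. -/
noncomputable def jacobiW (α β : ℝ) (t : ℝ) : ℝ :=
  if t ∈ Set.Icc (-1 : ℝ) 1 then (1 - t) ^ α * (1 + t) ^ β else 0

lemma jacobiW_neg (α β x : ℝ) : jacobiW α β (-x) = jacobiW β α x := by
  simp only [jacobiW]
  have h : (-x) ∈ Set.Icc (-1:ℝ) 1 ↔ x ∈ Set.Icc (-1:ℝ) 1 := by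
    simp only [Set.mem_Icc]
    constructor <;> rintro ⟨h1, h2⟩ <;> constructor <;> linarith
  rw [if_congr h rfl rfl]
  split
  · rw [sub_neg_eq_add, show (1:ℝ) + -x = 1 - x by ring, mul_comm]
  · rfl

/-- For α, β > −1:
(a) ν₂(w_{α,β}; t) = 0 for |t| > 2;
(b) ν₂(w_{α,β}; −t) = ν₂(w_{β,α}; t) for all t;
(c) for 0 < t ≤ 2, ν₂(w_{α,β}; t) = 2^{−(2α+1)} (2−t)^{2α+3}
    ∫_{−1}^1 (2t + ((2−t)²/4)(1−u²))^β u² (1−u²)^α du. -/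
theorem corr2_jacobi (α β : ℝ) (hα : -1 < α) (hβ : -1 < β) :
    (∀ t : ℝ, 2 < |t| → corr2 (jacobiW α β) t = 0) ∧
    (∀ t : ℝ, corr2 (jacobiW α β) (-t) = corr2 (jacobiW β α) t) ∧
    (∀ t : ℝ, 0 < t → t ≤ 2 →
      corr2 (jacobiW α β) t =
        (2 : ℝ) ^ (-(2 * α + 1)) * (2 - t) ^ (2 * α + 3) *
          ∫ u in (-1 : ℝ)..1,
            (2 * t + ((2 - t) ^ 2 / 4) * (1 - u ^ 2)) ^ β * (u ^ 2 * (1 - u ^ 2) ^ α)) := by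
  refine ⟨?_, ?_, ?_⟩
  · -- (a)
    intro t ht
    have hz : ∀ s : ℝ, (t - 2 * s) ^ 2 * jacobiW α β s * jacobiW α β (t - s) = 0 := by
      intro s
      by_cases hs : s ∈ Set.Icc (-1:ℝ) 1
      · have hns : t - s ∉ Set.Icc (-1:ℝ) 1 := by
          simp only [Set.mem_Icc, not_and_or, not_le]
          rcases lt_abs.mp ht with h | h
          · right; have := hs.2; linarith
          · left; have := hs.1; linarith
        simp [jacobiW, hns]
      · simp [jacobiW, hs]
    simp only [corr2, hz, integral_zero]
  · -- (b)
    intro t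
    unfold corr2
    rw [← MeasureTheory.integral_neg_eq_self
      (fun s => (-t - 2 * s) ^ 2 * jacobiW α β s * jacobiW α β (-t - s)) volume]
    congr 1
    funext s
    rw [jacobiW_neg, show (-t - -s) = -(t - s) by ring, jacobiW_neg]
    ring
  · -- (c)
    intro t ht0 ht2
    rcases eq_or_lt_of_le ht2 with h2 | hlt
    · -- t = 2
      subst h2
      have hz : ∀ s : ℝ, ((2:ℝ) - 2 * s) ^ 2 * jacobiW α β s * jacobiW α β (2 - s) = 0 := by
        intro s
        rcases lt_trichotomy s 1 with hs | hs | hs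
        · have hns : (2:ℝ) - s ∉ Set.Icc (-1:ℝ) 1 := by
            simp only [Set.mem_Icc, not_and_or, not_le]
            right; linarith
          simp [jacobiW, hns]
        · subst hs; norm_num
        · have hns : s ∉ Set.Icc (-1:ℝ) 1 := by
            simp only [Set.mem_Icc, not_and_or, not_le]
            right; linarith
          simp [jacobiW, hns]
      have hr : ((2:ℝ) - 2) ^ (2 * α + 3) = 0 := by
        rw [sub_self, Real.zero_rpow (by linarith)]
      simp only [corr2, hz, integral_zero, hr, mul_zero, zero_mul]
    · -- 0 < t < 2
      have hw : (0:ℝ) < 2 - t := by linarith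
      -- Step 1: reduce corr2 to an interval integral
      have key : (fun s => (t - 2 * s) ^ 2 * jacobiW α β s * jacobiW α β (t - s))
          = Set.indicator (Set.Icc (t - 1) 1)
              (fun s => (t - 2 * s) ^ 2 * ((1 - s) ^ α * (1 + s) ^ β) *
                ((1 - (t - s)) ^ α * (1 + (t - s)) ^ β)) := by
        funext s
        by_cases hs : s ∈ Set.Icc (t - 1) 1
        · rw [Set.indicator_of_mem hs]
          rw [Set.mem_Icc] at hs
          obtain ⟨hs1, hs2⟩ := hs
          have hm1 : s ∈ Set.Icc (-1:ℝ) 1 := ⟨by linarith, hs2⟩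
          have hm2 : t - s ∈ Set.Icc (-1:ℝ) 1 := ⟨by linarith, by linarith⟩
          simp only [jacobiW, if_pos hm1, if_pos hm2]
        · rw [Set.indicator_of_notMem hs]
          simp only [Set.mem_Icc, not_and_or, not_le] at hs
          rcases hs with hs | hs
          · have hns : t - s ∉ Set.Icc (-1:ℝ) 1 := by
              simp only [Set.mem_Icc, not_and_or, not_le]
              right; linarith
            simp [jacobiW, hns]
          · have hns : s ∉ Set.Icc (-1:ℝ) 1 := by
              simp only [Set.mem_Icc, not_and_or, not_le]
              right; linarith
            simp [jacobiW, hns]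
      have hle : t - 1 ≤ (1:ℝ) := by linarith
      have step1 : corr2 (jacobiW α β) t
          = ∫ s in (t-1)..1, (t - 2 * s) ^ 2 * ((1 - s) ^ α * (1 + s) ^ β) *
                ((1 - (t - s)) ^ α * (1 + (t - s)) ^ β) := by
        rw [corr2, key, integral_indicator measurableSet_Icc,
          intervalIntegral.integral_of_le hle, ← integral_Icc_eq_integral_Ioc]
      -- Step 2: substitution s = c*u + d with c = (2-t)/2, d = t/2
      have hc : ((2 - t)/2 : ℝ) ≠ 0 := by positivity
      have hsub := intervalIntegral.integral_comp_mul_add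
        (fun s => (t - 2 * s) ^ 2 * ((1 - s) ^ α * (1 + s) ^ β) *
          ((1 - (t - s)) ^ α * (1 + (t - s)) ^ β)) hc (t/2) (a := -1) (b := 1)
      rw [show (2 - t)/2 * (-1) + t/2 = t - 1 by ring, show (2 - t)/2 * 1 + t/2 = (1:ℝ) by ring]
        at hsub
      have step2 : (∫ s in (t-1)..1, (t - 2 * s) ^ 2 * ((1 - s) ^ α * (1 + s) ^ β) *
                ((1 - (t - s)) ^ α * (1 + (t - s)) ^ β))
          = ∫ u in (-1:ℝ)..1, ((2-t)/2) *
              ((t - 2 * ((2-t)/2 * u + t/2)) ^ 2 *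
                ((1 - ((2-t)/2 * u + t/2)) ^ α * (1 + ((2-t)/2 * u + t/2)) ^ β) *
                ((1 - (t - ((2-t)/2 * u + t/2))) ^ α * (1 + (t - ((2-t)/2 * u + t/2))) ^ β)) := by
        rw [intervalIntegral.integral_const_mul, hsub, smul_eq_mul, ← mul_assoc,
          mul_inv_cancel₀ hc, one_mul]
      rw [step1, step2]
      -- Step 3: pointwise identification of the integrands
      rw [← intervalIntegral.integral_const_mul]
      apply intervalIntegral.integral_congr
      intro u hu
      rw [Set.uIcc_of_le (by norm_num : (-1:ℝ) ≤ 1), Set.mem_Icc] at hu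
      obtain ⟨hu1, hu2⟩ := hu
      simp only
      have h1u : (0:ℝ) ≤ 1 - u := by linarith
      have h1u' : (0:ℝ) ≤ 1 + u := by linarith
      have hcn : (0:ℝ) ≤ (2 - t)/2 := by linarith
      have hx : (0:ℝ) ≤ 1 + ((2-t)/2 * u + t/2) := by
        nlinarith [mul_nonneg (by linarith : (0:ℝ) ≤ 2 - t) h1u']
      have hy : (0:ℝ) ≤ 1 + (t - ((2-t)/2 * u + t/2)) := by
        nlinarith [mul_nonneg (by linarith : (0:ℝ) ≤ 2 - t) h1u]
      have e1 : ((1:ℝ) - ((2-t)/2 * u + t/2)) ^ α * (1 - (t - ((2-t)/2 * u + t/2))) ^ α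
          = ((2-t)^2/4) ^ α * (1 - u^2) ^ α := by
        rw [show (1:ℝ) - ((2-t)/2 * u + t/2) = (2-t)/2 * (1 - u) by ring,
            show (1:ℝ) - (t - ((2-t)/2 * u + t/2)) = (2-t)/2 * (1 + u) by ring,
            ← Real.mul_rpow (mul_nonneg hcn h1u) (mul_nonneg hcn h1u'),
            show (2-t)/2 * (1 - u) * ((2-t)/2 * (1 + u)) = ((2-t)^2/4) * (1 - u^2) by ring,
            Real.mul_rpow (by positivity) (by nlinarith)]
      have e2 : ((1:ℝ) + ((2-t)/2 * u + t/2)) ^ β * (1 + (t - ((2-t)/2 * u + t/2))) ^ β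
          = (2 * t + (2-t)^2/4 * (1 - u^2)) ^ β := by
        rw [← Real.mul_rpow hx hy]
        congr 1
        ring
      have e3 : (t - 2 * ((2-t)/2 * u + t/2)) ^ 2 = (2-t)^2 * u^2 := by ring
      have h4 : ((2-t)/2 : ℝ) * (2-t)^2 * (((2-t)^2/4) ^ α)
          = 2 ^ (-(2*α+1)) * (2-t) ^ (2*α+3) := by
        have ea : (((2-t)^2/4 : ℝ)) ^ α = (2-t) ^ (2*α) / 2 ^ (2*α) := by
          rw [show ((2-t)^2/4 : ℝ) = ((2-t)/2)^2 by ring,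
            ← Real.rpow_natCast ((2-t)/2) 2, ← Real.rpow_mul (by positivity),
            show ((2:ℕ):ℝ) * α = 2 * α by push_cast; ring,
            Real.div_rpow hw.le (by norm_num : (0:ℝ) ≤ 2)]
        have eb : ((2-t):ℝ) ^ (2*α+3) = (2-t) ^ (2*α) * (2-t) ^ (3:ℝ) :=
          Real.rpow_add hw _ _
        have ec : ((2-t):ℝ) ^ (3:ℝ) = (2-t) ^ (3:ℕ) := by
          rw [← Real.rpow_natCast (2-t) 3]; norm_num
        have ed : (2:ℝ) ^ (-(2*α+1)) = 2⁻¹ / 2 ^ (2*α) := by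
          rw [show -(2*α+1) = (-(2*α)) + (-1) by ring,
            Real.rpow_add (by norm_num : (0:ℝ) < 2),
            Real.rpow_neg (by norm_num : (0:ℝ) ≤ 2),
            Real.rpow_neg (by norm_num : (0:ℝ) ≤ 2), Real.rpow_one]
          field_simp
        have h2pos : (0:ℝ) < 2 ^ (2*α) := Real.rpow_pos_of_pos (by norm_num) _
        rw [ea, eb, ec, ed]
        field_simp
      rw [e3]
      linear_combination
        ((2-t)/2 * ((2-t)^2 * u^2) * (1 + ((2-t)/2 * u + t/2)) ^ β *
          (1 + (t - ((2-t)/2 * u + t/2))) ^ β) * e1 +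
        ((2-t)/2 * ((2-t)^2 * u^2) * ((2-t)^2/4) ^ α * (1 - u^2) ^ α) * e2 +
        (u^2 * (1 - u^2) ^ α * (2 * t + (2-t)^2/4 * (1 - u^2)) ^ β) * h4
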